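/- Each of the five sets {e}, {b}, {c}, {g,h}, {a,d,f,i} is a module of G and they partition the vertex set of G, but G is not the join of its induced subgraphs on these five parts; in particular, the vertices b and c lie in different parts yet are not adjacent in G. (This shows the output of the Java implementation of the ICALP 2008 algorithm, which reports a series root node with these five children, is incorrect.) -/

import Mathlib

inductive Vtx : Type
  | a | b | c | d | e | f | g | h | i
deriving DecidableEq

instance : Fintype Vtx :=
  ⟨{Vtx.a, Vtx.b, Vtx.c, Vtx.d, Vtx.e, Vtx.f, Vtx.g, Vtx.h, Vtx.i}, by intro x; cases x <;> simp⟩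

open Vtx

/-- The edges of the counterexample graph `G`. -/
def edgeList : List (Vtx × Vtx) :=
  [(a,b),(a,c),(a,d),(a,e),(a,g),(a,h),(a,i),
   (b,d),(b,e),(b,f),(b,g),(b,h),(b,i),
   (c,d),(c,f),(c,g),(c,h),(c,i),
   (d,e),(d,g),(d,h),(d,i),
   (e,f),(e,i),
   (f,g),(f,h),
   (g,i),(h,i)]

/-- The counterexample graph `G` on vertex set `{a,...,i}`. -/
def G : SimpleGraph Vtx := SimpleGraph.fromRel (fun x y => (x, y) ∈ edgeList)

/-- `M` is a module of the simple graph `H`: every vertex outside `M` is adjacent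
to all of `M` or to none of `M`. -/
def IsModule {α : Type*} (H : SimpleGraph α) (M : Set α) : Prop :=
  ∀ v ∉ M, (∀ x ∈ M, H.Adj v x) ∨ (∀ x ∈ M, ¬ H.Adj v x)

/-- Two sets overlap if they intersect but neither contains the other. -/
def Overlap {α : Type*} (M M' : Set α) : Prop :=
  (M ∩ M').Nonempty ∧ ¬ M ⊆ M' ∧ ¬ M' ⊆ M

/-- `M` is a strong module of `H`: a module overlapping no module of `H`. -/
def IsStrongModule {α : Type*} (H : SimpleGraph α) (M : Set α) : Prop :=
  IsModule H M ∧ ∀ M' : Set α, IsModule H M' → ¬ Overlap M M'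

/-- The five parts reported as children of the series root node by the Java
implementation of the ICALP 2008 algorithm. -/
def fiveParts : Set (Set Vtx) := {{e}, {b}, {c}, {g, h}, {a, d, f, i}}

lemma adj_iff (x y : Vtx) : G.Adj x y ↔ (x ≠ y ∧ ((x,y) ∈ edgeList ∨ (y,x) ∈ edgeList)) := by
  simp [G, SimpleGraph.fromRel_adj, and_comm]

lemma mod_aux (M : Set Vtx) [DecidablePred (· ∈ M)]
    (h : ∀ v, v ∉ M → (∀ x, x ∈ M → G.Adj v x) ∨ (∀ x, x ∈ M → ¬ G.Adj v x)) :
    IsModule G M := h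

/-- each of the five sets `{e}`, `{b}`, `{c}`, `{g,h}`, `{a,d,f,i}` is a
module of `G` and they partition the vertex set, but `G` is not the join of its
induced subgraphs on these parts: `b` and `c` lie in distinct parts yet are not
adjacent in `G`. -/
theorem stmt_15 :
    (∀ M ∈ fiveParts, IsModule G M) ∧
    ⋃₀ fiveParts = Set.univ ∧
    fiveParts.Pairwise Disjoint ∧
    ¬ (∀ M₁ ∈ fiveParts, ∀ M₂ ∈ fiveParts, M₁ ≠ M₂ →
        ∀ x ∈ M₁, ∀ y ∈ M₂, G.Adj x y) ∧
    (b ∈ ({b} : Set Vtx) ∧ c ∈ ({c} : Set Vtx) ∧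
      ({b} : Set Vtx) ≠ ({c} : Set Vtx) ∧ ¬ G.Adj b c) := by
  have hadj : ∀ x y, G.Adj x y ↔ decide (x ≠ y ∧ ((x,y) ∈ edgeList ∨ (y,x) ∈ edgeList)) = true := by
    intro x y; rw [adj_iff]; exact (decide_eq_true_iff).symm
  have hbc : ¬ G.Adj b c := by rw [hadj]; decide
  refine ⟨?_, ?_, ?_, ?_, rfl, rfl, ?_, hbc⟩
  · intro M hM
    intro v hv
    rcases hM with h | h | h | h | h <;> subst h <;>
      revert hv <;>
      (first | (cases v <;> simp only [Set.mem_singleton_iff, Set.mem_insert_iff] <;> intro hv <;>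
        (first
          | (left; intro x hx; rcases hx with rfl | rfl | rfl | rfl <;> rw [hadj] <;> decide)
          | (right; intro x hx; rcases hx with rfl | rfl | rfl | rfl <;> rw [hadj] <;> decide)
          | (left; intro x hx; rcases hx with rfl | rfl <;> rw [hadj] <;> decide)
          | (right; intro x hx; rcases hx with rfl | rfl <;> rw [hadj] <;> decide)
          | (left; intro x hx; subst hx; rw [hadj]; decide)
          | (right; intro x hx; subst hx; rw [hadj]; decide)
          | (exact absurd rfl hv)
          | simp at hv)))
  · ext v; simp only [Set.mem_sUnion, Set.mem_univ, iff_true, fiveParts]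
    cases v <;> simp
  · intro M₁ h₁ M₂ h₂ hne
    rcases h₁ with h | h | h | h | h <;> rcases h₂ with h' | h' | h' | h' | h' <;>
      subst h <;> subst h' <;> (try exact absurd rfl hne) <;>
      (rw [Set.disjoint_left]; intro x hx hx'; revert hx hx';
        simp only [Set.mem_singleton_iff, Set.mem_insert_iff];
        rintro (rfl|rfl|rfl|rfl) <;> simp <;> rintro (rfl|rfl|rfl) <;> simp)
  · intro h
    exact hbc (h {b} (by simp [fiveParts]) {c} (by simp [fiveParts])
      (by intro he; have : c ∈ ({b} : Set Vtx) := he ▸ rfl; simp at this) b rfl c rfl)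
  · intro he; have : c ∈ ({b} : Set Vtx) := he ▸ rfl; simp at this
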